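/- Let A be a self-adjoint endomorphism with eigenvalues λ₁,…,λₙ and suppose S_r = 0 but S_{r+1} ≠ 0 for some 1 ≤ r < n. Then the Newton transformation P_{r−1} is definite (either positive definite or negative definite). -/

import Mathlib

open scoped InnerProductSpace

/-- The `r`-th elementary symmetric polynomial of `λ₁, …, λₙ`. -/
noncomputable def esymm (n r : ℕ) (l : Fin n → ℝ) : ℝ :=
  ∑ s ∈ (Finset.univ : Finset (Fin n)).powersetCard r, ∏ i ∈ s, l i

/-- The Newton transformations associated to an endomorphism `A` and the
elementary symmetric functions `S` of its eigenvalues: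
`P₀ = I`, `P_r = (−1)^r S_r I + A ∘ P_{r−1}`. -/
noncomputable def newtonP {E : Type*} [NormedAddCommGroup E] [InnerProductSpace ℝ E]
    (A : E →ₗ[ℝ] E) (S : ℕ → ℝ) : ℕ → (E →ₗ[ℝ] E)
  | 0 => LinearMap.id
  | r + 1 => ((-1 : ℝ) ^ (r + 1) * S (r + 1)) • LinearMap.id + A ∘ₗ newtonP A S r

namespace NewtonAux

open Polynomial

lemma esymm_zero (s : Multiset ℝ) : s.esymm 0 = 1 := by
  simp [Multiset.esymm, Multiset.powersetCard_zero_left]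

lemma esymm_cons (a : ℝ) (s : Multiset ℝ) (j : ℕ) :
    (a ::ₘ s).esymm (j + 1) = s.esymm (j + 1) + a * s.esymm j := by
  rw [Multiset.esymm, Multiset.powersetCard_cons, Multiset.map_add, Multiset.sum_add,
    Multiset.map_map]
  congr 1
  rw [Multiset.esymm, ← Multiset.sum_map_mul_left]
  apply congrArg
  apply Multiset.map_congr rfl
  intro x _
  simp

lemma esymm_of_card_lt {s : Multiset ℝ} {j : ℕ} (h : Multiset.card s < j) : s.esymm j = 0 := by
  rw [Multiset.esymm, Multiset.powersetCard_eq_empty _ h]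
  simp

lemma esymm_card (s : Multiset ℝ) : s.esymm (Multiset.card s) = s.prod := by
  induction s using Multiset.induction with
  | empty => simp [esymm_zero]
  | cons a s ih =>
      rw [Multiset.card_cons, esymm_cons, esymm_of_card_lt (Nat.lt_succ_self _), ih,
        Multiset.prod_cons]
      ring

lemma esymm_inv (s : Multiset ℝ) (h0 : (0:ℝ) ∉ s) (j k : ℕ)
    (hjk : j + k = Multiset.card s) :
    (s.map (fun x => x⁻¹)).esymm j * s.prod = s.esymm k := by
  induction s using Multiset.induction generalizing j k with
  | empty =>
      simp only [Multiset.card_zero, Nat.add_eq_zero] at hjk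
      obtain ⟨rfl, rfl⟩ := hjk
      simp [esymm_zero]
  | cons a s ih =>
      have ha : a ≠ 0 := fun h' => h0 (h' ▸ Multiset.mem_cons_self a s)
      have h0s : (0:ℝ) ∉ s := fun h' => h0 (Multiset.mem_cons_of_mem h')
      rw [Multiset.card_cons] at hjk
      rw [Multiset.map_cons, Multiset.prod_cons]
      rcases j with _ | jj
      · have hk : k = Multiset.card s + 1 := by omega
        subst hk
        rw [esymm_zero, one_mul,
          show Multiset.card s + 1 = Multiset.card (a ::ₘ s) from (Multiset.card_cons a s).symm,
          esymm_card, Multiset.prod_cons]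
      · rcases k with _ | kk
        · have hj : jj = Multiset.card s := by omega
          subst hj
          rw [esymm_cons, esymm_of_card_lt (by simp [Multiset.card_map]), esymm_zero]
          have h1 := ih h0s (Multiset.card s) 0 (by omega)
          rw [esymm_zero] at h1
          calc (0 + a⁻¹ * (s.map (fun x => x⁻¹)).esymm (Multiset.card s)) * (a * s.prod)
              = (a⁻¹ * a) * ((s.map (fun x => x⁻¹)).esymm (Multiset.card s) * s.prod) := by ring
            _ = 1 := by rw [inv_mul_cancel₀ ha, h1, one_mul]
        · have h1 := ih h0s (jj + 1) kk (by omega)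
          have h2 := ih h0s jj (kk + 1) (by omega)
          rw [esymm_cons, esymm_cons, add_mul]
          calc (s.map (fun x => x⁻¹)).esymm (jj + 1) * (a * s.prod)
                + a⁻¹ * (s.map (fun x => x⁻¹)).esymm jj * (a * s.prod)
              = a * ((s.map (fun x => x⁻¹)).esymm (jj + 1) * s.prod)
                + (a⁻¹ * a) * ((s.map (fun x => x⁻¹)).esymm jj * s.prod) := by ring
            _ = s.esymm (kk + 1) + a * s.esymm kk := by
                rw [h1, h2, inv_mul_cancel₀ ha, one_mul]; ring

lemma sum_sq (s : Multiset ℝ) :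
    (s.map (fun x => x ^ 2)).sum = s.esymm 1 ^ 2 - 2 * s.esymm 2 := by
  induction s using Multiset.induction with
  | empty =>
      rw [Multiset.map_zero, Multiset.sum_zero, esymm_of_card_lt (by simp),
        esymm_of_card_lt (by simp)]
      ring
  | cons a s ih =>
      rw [Multiset.map_cons, Multiset.sum_cons, ih,
        show (2:ℕ) = 1 + 1 from rfl, esymm_cons, esymm_cons, esymm_zero]
      ring

lemma sum_sq_pos (s : Multiset ℝ) (hne : s ≠ 0) (h0 : (0:ℝ) ∉ s) :
    0 < (s.map (fun x => x ^ 2)).sum := by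
  obtain ⟨a, ha⟩ := Multiset.exists_mem_of_ne_zero hne
  obtain ⟨t, rfl⟩ := Multiset.exists_cons_of_mem ha
  rw [Multiset.map_cons, Multiset.sum_cons]
  have ha0 : a ≠ 0 := fun h => h0 (h ▸ Multiset.mem_cons_self _ _)
  have h1 : 0 < a ^ 2 := by positivity
  have h2 : 0 ≤ (t.map (fun x => x ^ 2)).sum := by
    apply Multiset.sum_nonneg
    intro x hx
    obtain ⟨y, _, rfl⟩ := Multiset.mem_map.mp hx
    positivity
  linarith

def RR (p : ℝ[X]) : Prop := Multiset.card p.roots = p.natDegree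

lemma RR.deriv {p : ℝ[X]} (hp : RR p) :
    RR (derivative p) ∧ (derivative p).natDegree = p.natDegree - 1 := by
  have h1 := p.card_roots_le_derivative
  have h2 := (derivative p).card_roots'
  have h3 := p.natDegree_derivative_le
  unfold RR at hp ⊢
  omega

lemma RR.iter {p : ℝ[X]} (hp : RR p) (t : ℕ) :
    RR (derivative^[t] p) ∧ (derivative^[t] p).natDegree = p.natDegree - t := by
  induction t with
  | zero => exact ⟨hp, by simp⟩
  | succ t ih =>
      obtain ⟨h1, h2⟩ := ih
      obtain ⟨h3, h4⟩ := h1.deriv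
      rw [Function.iterate_succ_apply']
      exact ⟨h3, by omega⟩

lemma q_spec (s : Multiset ℝ) (d : ℕ) (hd : d ≤ Multiset.card s) :
    ∃ q : ℝ[X], RR q ∧ q.natDegree = d ∧
      ∀ i, i ≤ d → q.coeff i =
        (((i + (Multiset.card s - d)).descFactorial (Multiset.card s - d) : ℕ) : ℝ) *
          ((-1) ^ (d - i) * s.esymm (d - i)) := by
  have hroots : ((s.map fun a => X - C a).prod).roots = s := roots_multiset_prod_X_sub_C s
  have hdeg : ((s.map fun a => X - C a).prod).natDegree = Multiset.card s :=
    natDegree_multiset_prod_X_sub_C_eq_card s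
  have hRRp : RR ((s.map fun a => X - C a).prod) := by rw [RR, hroots, hdeg]
  obtain ⟨h1, h2⟩ := hRRp.iter (Multiset.card s - d)
  rw [hdeg] at h2
  refine ⟨derivative^[Multiset.card s - d] ((s.map fun a => X - C a).prod), h1, by omega, ?_⟩
  intro i hi
  rw [Polynomial.coeff_iterate_derivative, nsmul_eq_mul]
  congr 1
  have hle : i + (Multiset.card s - d) ≤ Multiset.card s := by omega
  rw [Multiset.prod_X_sub_C_coeff s hle,
    show Multiset.card s - (i + (Multiset.card s - d)) = d - i by omega]

lemma cancel_aux {L c e : ℝ} (hL : L ≠ 0) (hc : c ≠ 0) (h : L * c * e = 0) : e = 0 := by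
  rcases mul_eq_zero.mp h with h' | h'
  · exact absurd h' (mul_ne_zero hL hc)
  · exact h'

lemma key {q : ℝ[X]} (hq : RR q) (hdeg : 1 ≤ q.natDegree)
    (h1 : q.coeff 1 = 0) (h2 : q.coeff 2 = 0) : q.coeff 0 = 0 := by
  by_contra h0
  have hq0 : q ≠ 0 := fun h => h0 (by simp [h])
  have hL : q.leadingCoeff ≠ 0 := leadingCoeff_ne_zero.mpr hq0
  have hcard : Multiset.card q.roots = q.natDegree := hq
  have hvq : ∀ i, i ≤ q.natDegree → q.coeff i =
      q.leadingCoeff * (-1) ^ (q.natDegree - i) * q.roots.esymm (q.natDegree - i) :=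
    fun i hi => Polynomial.coeff_eq_esymm_roots_of_card hq hi
  have hneg : ∀ m : ℕ, ((-1:ℝ)) ^ m ≠ 0 := fun m => pow_ne_zero _ (by norm_num)
  have hd1 : q.natDegree ≠ 1 := by
    intro h
    have hx := hvq 1 (by omega)
    rw [h1, h, Nat.sub_self, pow_zero, esymm_zero, mul_one, mul_one] at hx
    exact hL hx.symm
  have hd2 : q.natDegree ≠ 2 := by
    intro h
    have hx := hvq 2 (by omega)
    rw [h2, h, Nat.sub_self, pow_zero, esymm_zero, mul_one, mul_one] at hx
    exact hL hx.symm
  have hd3 : 3 ≤ q.natDegree := by omega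
  have e_d : q.roots.esymm q.natDegree ≠ 0 := by
    intro h
    have hx := hvq 0 (by omega)
    rw [Nat.sub_zero, h, mul_zero] at hx
    exact h0 hx
  have hprod : q.roots.prod ≠ 0 := by
    have := esymm_card q.roots
    rw [hcard] at this
    rw [← this]; exact e_d
  have h0notin : (0:ℝ) ∉ q.roots := fun h => hprod (Multiset.prod_eq_zero h)
  have ed1 : q.roots.esymm (q.natDegree - 1) = 0 := by
    have hx := hvq 1 (by omega)
    rw [h1] at hx
    exact cancel_aux hL (hneg _) hx.symm
  have ed2 : q.roots.esymm (q.natDegree - 2) = 0 := by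
    have hx := hvq 2 (by omega)
    rw [h2] at hx
    exact cancel_aux hL (hneg _) hx.symm
  have hu1 : (q.roots.map (fun x => x⁻¹)).esymm 1 * q.roots.prod
      = q.roots.esymm (q.natDegree - 1) := esymm_inv _ h0notin 1 _ (by omega)
  have hu2 : (q.roots.map (fun x => x⁻¹)).esymm 2 * q.roots.prod
      = q.roots.esymm (q.natDegree - 2) := esymm_inv _ h0notin 2 _ (by omega)
  rw [ed1] at hu1
  rw [ed2] at hu2
  have hu1' : (q.roots.map (fun x => x⁻¹)).esymm 1 = 0 :=
    (mul_eq_zero.mp hu1).resolve_right hprod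
  have hu2' : (q.roots.map (fun x => x⁻¹)).esymm 2 = 0 :=
    (mul_eq_zero.mp hu2).resolve_right hprod
  have hsum : ((q.roots.map (fun x => x⁻¹)).map (fun x => x ^ 2)).sum = 0 := by
    rw [sum_sq, hu1', hu2']; ring
  have hpos : 0 < ((q.roots.map (fun x => x⁻¹)).map (fun x => x ^ 2)).sum := by
    apply sum_sq_pos
    · intro h
      have : Multiset.card (q.roots.map (fun x => x⁻¹)) = 0 := by rw [h]; rfl
      rw [Multiset.card_map, hcard] at this
      omega
    · intro h
      obtain ⟨y, hy, hy0⟩ := Multiset.mem_map.mp h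
      rw [inv_eq_zero] at hy0
      exact h0notin (hy0 ▸ hy)
  linarith


lemma key2 {q : ℝ[X]} (hq : RR q) (hdeg : q.natDegree = 2) :
    4 * (q.coeff 2 * q.coeff 0) ≤ q.coeff 1 ^ 2 := by
  have hq0 : q ≠ 0 := fun h => by rw [h, natDegree_zero] at hdeg; omega
  have hcard : Multiset.card q.roots = 2 := by rw [hq, hdeg]
  obtain ⟨x, y, hxy⟩ := Multiset.card_eq_two.mp hcard
  have hvq : ∀ i, i ≤ 2 → q.coeff i =
      q.leadingCoeff * (-1) ^ (2 - i) * q.roots.esymm (2 - i) := by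
    intro i hi
    have := Polynomial.coeff_eq_esymm_roots_of_card hq (by omega : i ≤ q.natDegree)
    rwa [hdeg] at this
  have hsingle : ({y} : Multiset ℝ) = y ::ₘ 0 := rfl
  have e1 : q.roots.esymm 1 = x + y := by
    rw [hxy, show ({x, y} : Multiset ℝ) = x ::ₘ {y} from rfl,
      show (1:ℕ) = 0 + 1 from rfl, esymm_cons, esymm_zero, hsingle, esymm_cons, esymm_zero,
      esymm_of_card_lt (by simp)]
    ring
  have e2 : q.roots.esymm 2 = x * y := by
    rw [hxy, show ({x, y} : Multiset ℝ) = x ::ₘ {y} from rfl,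
      show (2:ℕ) = 1 + 1 from rfl, esymm_cons, esymm_of_card_lt (by simp), hsingle,
      show (1:ℕ) = 0 + 1 from rfl, esymm_cons, esymm_zero, esymm_of_card_lt (by simp)]
    ring
  rw [hvq 0 (by norm_num), hvq 1 (by norm_num), hvq 2 (by norm_num)]
  rw [show (2:ℕ) - 0 = 2 from rfl, show (2:ℕ) - 1 = 1 from rfl, Nat.sub_self, pow_zero,
    esymm_zero, e1, e2]
  nlinarith [sq_nonneg (q.leadingCoeff * (x - y)), sq_nonneg (x-y), sq_nonneg q.leadingCoeff]

lemma df1 (a : ℕ) : (a + 1).descFactorial a = (a + 1) * a.descFactorial a := by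
  have h := Nat.succ_descFactorial a a
  simpa using h

lemma df2 (a : ℕ) : 2 * (a + 2).descFactorial a = (a + 2) * ((a + 1) * a.descFactorial a) := by
  have h := Nat.succ_descFactorial (a + 1) a
  rw [show a + 1 + 1 - a = 2 by omega, show a + 1 + 1 = a + 2 by omega, df1] at h
  exact h

lemma nid_real (κ δ : ℕ) :
    (((κ + 1).descFactorial κ : ℕ) : ℝ) ^ 2 * (((δ + 1).descFactorial δ : ℕ) : ℝ) ^ 2
        * (((κ:ℝ) + 2) * ((δ:ℝ) + 2)) =
    4 * ((((κ + 2).descFactorial κ : ℕ) : ℝ) * ((κ.descFactorial κ : ℕ) : ℝ)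
        * (((δ + 2).descFactorial δ : ℕ) : ℝ) * ((δ.descFactorial δ : ℕ) : ℝ))
        * (((κ:ℝ) + 1) * ((δ:ℝ) + 1)) := by
  have h1κ : (((κ + 1).descFactorial κ : ℕ) : ℝ) = ((κ:ℝ) + 1) * ((κ.descFactorial κ : ℕ) : ℝ) := by
    exact_mod_cast congrArg (fun t : ℕ => (t : ℝ)) (df1 κ)
  have h1δ : (((δ + 1).descFactorial δ : ℕ) : ℝ) = ((δ:ℝ) + 1) * ((δ.descFactorial δ : ℕ) : ℝ) := by
    exact_mod_cast congrArg (fun t : ℕ => (t : ℝ)) (df1 δ)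
  have h2κ : 2 * (((κ + 2).descFactorial κ : ℕ) : ℝ)
      = ((κ:ℝ) + 2) * (((κ:ℝ) + 1) * ((κ.descFactorial κ : ℕ) : ℝ)) := by
    exact_mod_cast congrArg (fun t : ℕ => (t : ℝ)) (df2 κ)
  have h2δ : 2 * (((δ + 2).descFactorial δ : ℕ) : ℝ)
      = ((δ:ℝ) + 2) * (((δ:ℝ) + 1) * ((δ.descFactorial δ : ℕ) : ℝ)) := by
    exact_mod_cast congrArg (fun t : ℕ => (t : ℝ)) (df2 δ)
  have hCκ : (((κ + 2).descFactorial κ : ℕ) : ℝ)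
      = ((κ:ℝ) + 2) * (((κ:ℝ) + 1) * ((κ.descFactorial κ : ℕ) : ℝ)) / 2 := by linarith
  have hCδ : (((δ + 2).descFactorial δ : ℕ) : ℝ)
      = ((δ:ℝ) + 2) * (((δ:ℝ) + 1) * ((δ.descFactorial δ : ℕ) : ℝ)) / 2 := by linarith
  rw [h1κ, h1δ, hCκ, hCδ]
  ring
lemma newton (s : Multiset ℝ) (k : ℕ) (hk : 1 ≤ k) (hkm : k + 1 ≤ Multiset.card s) :
    (((k + 1) * (Multiset.card s - k + 1) : ℕ) : ℝ) * (s.esymm (k - 1) * s.esymm (k + 1)) ≤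
    ((k * (Multiset.card s - k) : ℕ) : ℝ) * s.esymm k ^ 2 := by
  obtain ⟨κ, rfl⟩ : ∃ κ, k = κ + 1 := ⟨k - 1, by omega⟩
  set δ := Multiset.card s - (κ + 2) with hδdef
  have hms : Multiset.card s - (κ + 1) = δ + 1 := by omega
  simp only [Nat.add_sub_cancel]
  rw [hms, show κ + 1 + 1 = κ + 2 by omega]
  by_cases hP : s.esymm κ * s.esymm (κ + 2) ≤ 0
  · have h1 : (0:ℝ) ≤ (((κ + 1) * (δ + 1) : ℕ) : ℝ) * s.esymm (κ + 1) ^ 2 := by positivity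
    have h2 : (((κ + 2) * (δ + 1 + 1) : ℕ) : ℝ) * (s.esymm κ * s.esymm (κ + 2)) ≤ 0 :=
      mul_nonpos_of_nonneg_of_nonpos (by positivity) hP
    linarith
  push_neg at hP
  have hek1 : s.esymm (κ + 2) ≠ 0 := by
    intro h; rw [h, mul_zero] at hP; exact lt_irrefl _ hP
  obtain ⟨q, hRRq, hdq, hcq⟩ := q_spec s (κ + 2) (by omega)
  rw [← hδdef] at hcq
  have hDne : ∀ i : ℕ, ((i + δ).descFactorial δ) ≠ 0 := fun i => by
    rw [Ne, Nat.descFactorial_eq_zero_iff_lt]; omega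
  have hEne : ∀ i : ℕ, ((i + κ).descFactorial κ) ≠ 0 := fun i => by
    rw [Ne, Nat.descFactorial_eq_zero_iff_lt]; omega
  have hc0 : q.coeff 0 ≠ 0 := by
    rw [hcq 0 (by omega)]
    simp only [Nat.sub_zero]
    exact mul_ne_zero (Nat.cast_ne_zero.mpr (hDne 0))
      (mul_ne_zero (pow_ne_zero _ (by norm_num)) hek1)
  have hq0 : q ≠ 0 := fun h => hc0 (by simp [h])
  have hL : q.leadingCoeff ≠ 0 := leadingCoeff_ne_zero.mpr hq0
  have hcard : Multiset.card q.roots = κ + 2 := hdq ▸ hRRq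
  have hvq : ∀ i, i ≤ κ + 2 → q.coeff i =
      q.leadingCoeff * (-1) ^ (κ + 2 - i) * q.roots.esymm (κ + 2 - i) := by
    intro i hi
    have h := Polynomial.coeff_eq_esymm_roots_of_card hRRq (by omega : i ≤ q.natDegree)
    rwa [hdq] at h
  have hmatch : ∀ j, j ≤ κ + 2 → q.leadingCoeff * q.roots.esymm j
      = (((κ + 2 - j + δ).descFactorial δ : ℕ) : ℝ) * s.esymm j := by
    intro j hj
    have h1 := hvq (κ + 2 - j) (by omega)
    rw [hcq (κ + 2 - j) (by omega), show κ + 2 - (κ + 2 - j) = j by omega] at h1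
    have hne : ((-1:ℝ)) ^ j ≠ 0 := pow_ne_zero _ (by norm_num)
    have h1' : ((-1:ℝ)) ^ j * (q.leadingCoeff * q.roots.esymm j
        - (((κ + 2 - j + δ).descFactorial δ : ℕ) : ℝ) * s.esymm j) = 0 := by
      linear_combination -h1
    rcases mul_eq_zero.mp h1' with h | h
    · exact absurd h hne
    · linarith
  have hm0 := hmatch (κ + 2) le_rfl
  rw [Nat.sub_self, Nat.zero_add] at hm0
  have hmk := hmatch (κ + 1) (by omega)
  rw [show κ + 2 - (κ + 1) = 1 by omega, Nat.add_comm 1 δ] at hmk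
  have hm2 := hmatch κ (by omega)
  rw [show κ + 2 - κ = 2 by omega, Nat.add_comm 2 δ] at hm2
  have het : q.roots.esymm (κ + 2) ≠ 0 := by
    intro h
    rw [h, mul_zero] at hm0
    have hd0 : (δ.descFactorial δ) ≠ 0 := by simpa using hDne 0
    exact (mul_ne_zero (Nat.cast_ne_zero.mpr hd0) hek1) hm0.symm
  have hprodeq : q.roots.prod = q.roots.esymm (κ + 2) := by
    have := esymm_card q.roots; rw [hcard] at this; exact this.symm
  have hprod : q.roots.prod ≠ 0 := by rw [hprodeq]; exact het
  have h0notin : (0:ℝ) ∉ q.roots := fun h => hprod (Multiset.prod_eq_zero h)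
  have hcardu : Multiset.card (q.roots.map (fun x => x⁻¹)) = κ + 2 := by
    rw [Multiset.card_map, hcard]
  have hRroots : ((q.roots.map (fun x => x⁻¹)).map fun a => X - C a).prod.roots
      = q.roots.map (fun x => x⁻¹) := roots_multiset_prod_X_sub_C _
  have hRdeg : ((q.roots.map (fun x => x⁻¹)).map fun a => X - C a).prod.natDegree = κ + 2 := by
    rw [natDegree_multiset_prod_X_sub_C_eq_card, hcardu]
  have hRRR : RR ((q.roots.map (fun x => x⁻¹)).map fun a => X - C a).prod := by
    rw [RR, hRroots, hRdeg, hcardu]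
  obtain ⟨hRRr2, hdr2⟩ := hRRR.iter κ
  rw [hRdeg] at hdr2
  have hdr2' : (derivative^[κ] ((q.roots.map (fun x => x⁻¹)).map fun a => X - C a).prod).natDegree
      = 2 := by omega
  have hkey2 := key2 hRRr2 hdr2'
  have hcoeffR : ∀ i, i ≤ 2 →
      (derivative^[κ] ((q.roots.map (fun x => x⁻¹)).map fun a => X - C a).prod).coeff i
      = (((κ + i).descFactorial κ : ℕ) : ℝ)
        * ((-1) ^ (2 - i) * (q.roots.map (fun x => x⁻¹)).esymm (2 - i)) := by
    intro i hi
    rw [Polynomial.coeff_iterate_derivative, nsmul_eq_mul,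
      Multiset.prod_X_sub_C_coeff _ (by rw [hcardu]; omega), hcardu,
      show κ + 2 - (i + κ) = 2 - i by omega, Nat.add_comm i κ]
  have hu2 : (q.roots.map (fun x => x⁻¹)).esymm 2 * q.roots.prod = q.roots.esymm κ :=
    esymm_inv q.roots h0notin 2 κ (by omega)
  have hu1 : (q.roots.map (fun x => x⁻¹)).esymm 1 * q.roots.prod = q.roots.esymm (κ + 1) :=
    esymm_inv q.roots h0notin 1 (κ + 1) (by omega)
  rw [hcoeffR 2 le_rfl, hcoeffR 1 (by norm_num), hcoeffR 0 (by norm_num)] at hkey2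
  norm_num [esymm_zero] at hkey2
  have hkey2' : 4 * ((((κ + 2).descFactorial κ : ℕ) : ℝ) * ((κ.descFactorial κ : ℕ) : ℝ)
      * (q.roots.map (fun x => x⁻¹)).esymm 2)
      ≤ (((κ + 1).descFactorial κ : ℕ) : ℝ) ^ 2 * (q.roots.map (fun x => x⁻¹)).esymm 1 ^ 2 := by
    nlinarith [hkey2]
  have hpr2 : (0:ℝ) < q.roots.prod ^ 2 := by positivity
  have hineq1 : 4 * ((((κ + 2).descFactorial κ : ℕ) : ℝ) * ((κ.descFactorial κ : ℕ) : ℝ)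
      * (q.roots.esymm κ * q.roots.esymm (κ + 2)))
      ≤ (((κ + 1).descFactorial κ : ℕ) : ℝ) ^ 2 * q.roots.esymm (κ + 1) ^ 2 := by
    have hm := mul_le_mul_of_nonneg_right hkey2' (le_of_lt hpr2)
    have e1 : 4 * ((((κ + 2).descFactorial κ : ℕ) : ℝ) * ((κ.descFactorial κ : ℕ) : ℝ)
        * (q.roots.esymm κ * q.roots.esymm (κ + 2)))
        = 4 * ((((κ + 2).descFactorial κ : ℕ) : ℝ) * ((κ.descFactorial κ : ℕ) : ℝ)
        * (q.roots.map (fun x => x⁻¹)).esymm 2) * q.roots.prod ^ 2 := by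
      rw [← hu2, ← hprodeq]; ring
    have e2 : (((κ + 1).descFactorial κ : ℕ) : ℝ) ^ 2 * q.roots.esymm (κ + 1) ^ 2
        = (((κ + 1).descFactorial κ : ℕ) : ℝ) ^ 2
          * (q.roots.map (fun x => x⁻¹)).esymm 1 ^ 2 * q.roots.prod ^ 2 := by
      rw [← hu1]; ring
    rw [e1, e2]; exact hm
  have hineq2 : 4 * ((((κ + 2).descFactorial κ : ℕ) : ℝ) * ((κ.descFactorial κ : ℕ) : ℝ))
      * (((((δ + 2).descFactorial δ : ℕ)) : ℝ) * s.esymm κ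
          * (((((δ).descFactorial δ : ℕ)) : ℝ) * s.esymm (κ + 2)))
      ≤ (((κ + 1).descFactorial κ : ℕ) : ℝ) ^ 2
        * ((((δ + 1).descFactorial δ : ℕ) : ℝ) * s.esymm (κ + 1)) ^ 2 := by
    have hm := mul_le_mul_of_nonneg_left hineq1 (sq_nonneg q.leadingCoeff)
    calc 4 * ((((κ + 2).descFactorial κ : ℕ) : ℝ) * ((κ.descFactorial κ : ℕ) : ℝ))
        * (((((δ + 2).descFactorial δ : ℕ)) : ℝ) * s.esymm κ
          * (((((δ).descFactorial δ : ℕ)) : ℝ) * s.esymm (κ + 2)))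
        = 4 * ((((κ + 2).descFactorial κ : ℕ) : ℝ) * ((κ.descFactorial κ : ℕ) : ℝ))
          * ((q.leadingCoeff * q.roots.esymm κ)
            * (q.leadingCoeff * q.roots.esymm (κ + 2))) := by rw [hm2, hm0]
      _ = q.leadingCoeff ^ 2 * (4 * ((((κ + 2).descFactorial κ : ℕ) : ℝ)
            * ((κ.descFactorial κ : ℕ) : ℝ)
            * (q.roots.esymm κ * q.roots.esymm (κ + 2)))) := by ring
      _ ≤ q.leadingCoeff ^ 2 * ((((κ + 1).descFactorial κ : ℕ) : ℝ) ^ 2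
            * q.roots.esymm (κ + 1) ^ 2) := hm
      _ = (((κ + 1).descFactorial κ : ℕ) : ℝ) ^ 2
            * (q.leadingCoeff * q.roots.esymm (κ + 1)) ^ 2 := by ring
      _ = (((κ + 1).descFactorial κ : ℕ) : ℝ) ^ 2
            * ((((δ + 1).descFactorial δ : ℕ) : ℝ) * s.esymm (κ + 1)) ^ 2 := by rw [hmk]
  have hWpos : (0:ℝ) < 4 * ((((κ + 2).descFactorial κ : ℕ) : ℝ) * ((κ.descFactorial κ : ℕ) : ℝ)
      * (((δ + 2).descFactorial δ : ℕ) : ℝ) * (((δ).descFactorial δ : ℕ) : ℝ)) := by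
    have a1 : (0:ℕ) < (κ + 2).descFactorial κ := Nat.pos_of_ne_zero (by simpa using hEne 2)
    have a2 : (0:ℕ) < κ.descFactorial κ := Nat.pos_of_ne_zero (by simpa using hEne 0)
    have a3 : (0:ℕ) < (δ + 2).descFactorial δ := Nat.pos_of_ne_zero (by simpa using hDne 2)
    have a4 : (0:ℕ) < δ.descFactorial δ := Nat.pos_of_ne_zero (by simpa using hDne 0)
    have b1 : (0:ℝ) < ((κ + 2).descFactorial κ : ℕ) := by exact_mod_cast a1
    have b2 : (0:ℝ) < (κ.descFactorial κ : ℕ) := by exact_mod_cast a2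
    have b3 : (0:ℝ) < ((δ + 2).descFactorial δ : ℕ) := by exact_mod_cast a3
    have b4 : (0:ℝ) < ((δ).descFactorial δ : ℕ) := by exact_mod_cast a4
    positivity
  have final : (4 * ((((κ + 2).descFactorial κ : ℕ) : ℝ) * ((κ.descFactorial κ : ℕ) : ℝ)
        * (((δ + 2).descFactorial δ : ℕ) : ℝ) * (((δ).descFactorial δ : ℕ) : ℝ)))
      * ((((κ + 2) * (δ + 1 + 1) : ℕ) : ℝ) * (s.esymm κ * s.esymm (κ + 2)))
      ≤ (4 * ((((κ + 2).descFactorial κ : ℕ) : ℝ) * ((κ.descFactorial κ : ℕ) : ℝ)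
        * (((δ + 2).descFactorial δ : ℕ) : ℝ) * (((δ).descFactorial δ : ℕ) : ℝ)))
      * ((((κ + 1) * (δ + 1) : ℕ) : ℝ) * s.esymm (κ + 1) ^ 2) := by
    have step1 : (4 * ((((κ + 2).descFactorial κ : ℕ) : ℝ) * ((κ.descFactorial κ : ℕ) : ℝ)
        * (((δ + 2).descFactorial δ : ℕ) : ℝ) * (((δ).descFactorial δ : ℕ) : ℝ)))
        * ((((κ + 2) * (δ + 1 + 1) : ℕ) : ℝ) * (s.esymm κ * s.esymm (κ + 2)))
        = (((κ:ℝ) + 2) * ((δ:ℝ) + 2))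
          * (4 * ((((κ + 2).descFactorial κ : ℕ) : ℝ) * ((κ.descFactorial κ : ℕ) : ℝ))
          * (((((δ + 2).descFactorial δ : ℕ)) : ℝ) * s.esymm κ
            * (((((δ).descFactorial δ : ℕ)) : ℝ) * s.esymm (κ + 2)))) := by
      push_cast; ring
    have step2 := mul_le_mul_of_nonneg_left hineq2
      (by positivity : (0:ℝ) ≤ ((κ:ℝ) + 2) * ((δ:ℝ) + 2))
    have step3 : (((κ:ℝ) + 2) * ((δ:ℝ) + 2))
          * ((((κ + 1).descFactorial κ : ℕ) : ℝ) ^ 2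
            * ((((δ + 1).descFactorial δ : ℕ) : ℝ) * s.esymm (κ + 1)) ^ 2)
        = ((((κ + 1).descFactorial κ : ℕ) : ℝ) ^ 2 * (((δ + 1).descFactorial δ : ℕ) : ℝ) ^ 2
            * (((κ:ℝ) + 2) * ((δ:ℝ) + 2))) * s.esymm (κ + 1) ^ 2 := by ring
    have step4 : ((((κ + 1).descFactorial κ : ℕ) : ℝ) ^ 2
            * (((δ + 1).descFactorial δ : ℕ) : ℝ) ^ 2
            * (((κ:ℝ) + 2) * ((δ:ℝ) + 2))) * s.esymm (κ + 1) ^ 2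
        = (4 * ((((κ + 2).descFactorial κ : ℕ) : ℝ) * ((κ.descFactorial κ : ℕ) : ℝ)
        * (((δ + 2).descFactorial δ : ℕ) : ℝ) * (((δ).descFactorial δ : ℕ) : ℝ)))
      * ((((κ + 1) * (δ + 1) : ℕ) : ℝ) * s.esymm (κ + 1) ^ 2) := by
      rw [nid_real κ δ]; push_cast; ring
    rw [step1]
    refine le_trans (le_trans step2 (le_of_eq step3)) (le_of_eq step4)
  exact le_of_mul_le_mul_left final hWpos

lemma vanish (s : Multiset ℝ) (j : ℕ) (h1 : s.esymm (j + 1) = 0) (h2 : s.esymm (j + 2) = 0) :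
    s.esymm (j + 3) = 0 := by
  by_cases hcard : Multiset.card s < j + 3
  · exact esymm_of_card_lt hcard
  push_neg at hcard
  obtain ⟨q, hRRq, hdq, hcq⟩ := q_spec s (j + 3) hcard
  have hc1 : q.coeff 1 = 0 := by
    rw [hcq 1 (by omega), show j + 3 - 1 = j + 2 by omega, h2]; ring
  have hc2 : q.coeff 2 = 0 := by
    rw [hcq 2 (by omega), show j + 3 - 2 = j + 1 by omega, h1]; ring
  have hc0 := key hRRq (by omega) hc1 hc2
  rw [hcq 0 (by omega), Nat.sub_zero] at hc0
  rcases mul_eq_zero.mp hc0 with h | h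
  · exfalso
    rw [Nat.cast_eq_zero, Nat.descFactorial_eq_zero_iff_lt] at h
    omega
  · rcases mul_eq_zero.mp h with h' | h'
    · exact absurd h' (pow_ne_zero _ (by norm_num))
    · exact h'

lemma sgn (s : Multiset ℝ) (μ : ℝ) (r : ℕ) (hr : 1 ≤ r) (hrm : r ≤ Multiset.card s)
    (hSr : s.esymm r + μ * s.esymm (r - 1) = 0)
    (hT : s.esymm (r + 1) + μ * s.esymm r ≠ 0) :
    s.esymm (r - 1) * (s.esymm (r + 1) + μ * s.esymm r) < 0 := by
  have he : s.esymm (r - 1) ≠ 0 := by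
    intro he0
    have her : s.esymm r = 0 := by rw [he0, mul_zero, add_zero] at hSr; exact hSr
    rcases Nat.lt_or_ge r 2 with h2 | h2
    · have hr1 : r = 1 := by omega
      rw [hr1] at he0
      rw [show (1:ℕ) - 1 = 0 from rfl, esymm_zero] at he0
      exact one_ne_zero he0
    · have hv := vanish s (r - 2) (by rwa [show r - 2 + 1 = r - 1 by omega])
        (by rwa [show r - 2 + 2 = r by omega])
      rw [show r - 2 + 3 = r + 1 by omega] at hv
      exact hT (by rw [hv, her, mul_zero, add_zero])
  have hμer : s.esymm r = -(μ * s.esymm (r - 1)) := by linarith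
  have hle : s.esymm (r - 1) * (s.esymm (r + 1) + μ * s.esymm r) ≤ 0 := by
    have hgoal : s.esymm (r - 1) * (s.esymm (r + 1) + μ * s.esymm r)
        = s.esymm (r - 1) * s.esymm (r + 1) - μ ^ 2 * s.esymm (r - 1) ^ 2 := by
      rw [hμer]; ring
    rw [hgoal]
    rcases Nat.lt_or_ge r (Multiset.card s) with hlt | hge
    · have hN := newton s r hr (by omega)
      have hsq : s.esymm r ^ 2 = μ ^ 2 * s.esymm (r - 1) ^ 2 := by rw [hμer]; ring
      rw [hsq] at hN
      have hc1 : ((r * (Multiset.card s - r) : ℕ) : ℝ)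
          ≤ (((r + 1) * (Multiset.card s - r + 1) : ℕ) : ℝ) := by
        have : r * (Multiset.card s - r) ≤ (r + 1) * (Multiset.card s - r + 1) :=
          Nat.mul_le_mul (by omega) (by omega)
        exact_mod_cast this
      have hpos : (0:ℝ) < (((r + 1) * (Multiset.card s - r + 1) : ℕ) : ℝ) := by
        have : 0 < (r + 1) * (Multiset.card s - r + 1) := by positivity
        exact_mod_cast this
      have hmm : (((r + 1) * (Multiset.card s - r + 1) : ℕ) : ℝ)
          * (s.esymm (r - 1) * s.esymm (r + 1))
          ≤ (((r + 1) * (Multiset.card s - r + 1) : ℕ) : ℝ)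
          * (μ ^ 2 * s.esymm (r - 1) ^ 2) := by
        refine le_trans hN ?_
        apply mul_le_mul_of_nonneg_right hc1 (by positivity)
      have := le_of_mul_le_mul_left hmm hpos
      linarith
    · have hr1 : s.esymm (r + 1) = 0 := esymm_of_card_lt (by omega)
      rw [hr1]
      nlinarith [sq_nonneg (μ * s.esymm (r - 1))]
  exact lt_of_le_of_ne hle (mul_ne_zero he hT)

end NewtonAux

/-- If `S_r = 0` and `S_{r+1} ≠ 0` for some `1 ≤ r < n`, then `P_{r−1}` is
definite (positive or negative definite). -/
theorem newtonP_definite_of_Sr_zero {E : Type*} [NormedAddCommGroup E]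
    [InnerProductSpace ℝ E] [FiniteDimensional ℝ E]
    (n : ℕ) (hdim : Module.finrank ℝ E = n)
    (A : E →ₗ[ℝ] E) (hA : A.IsSymmetric)
    (b : OrthonormalBasis (Fin n) ℝ E) (lam : Fin n → ℝ)
    (hb : ∀ i, A (b i) = lam i • b i)
    (S : ℕ → ℝ) (hS : ∀ r, S r = esymm n r lam)
    (r : ℕ) (hr1 : 1 ≤ r) (hrn : r < n)
    (hSr : S r = 0) (hSr' : S (r + 1) ≠ 0) :
    (∀ v : E, v ≠ 0 → 0 < ⟪newtonP A S (r - 1) v, v⟫_ℝ) ∨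
    (∀ v : E, v ≠ 0 → ⟪newtonP A S (r - 1) v, v⟫_ℝ < 0) := by
  classical
  have hmem : ∀ i : Fin n, i ∈ (Finset.univ : Finset (Fin n)).val :=
    fun i => Finset.mem_val.mpr (Finset.mem_univ i)
  set si : Fin n → Multiset ℝ := fun i => ((Finset.univ : Finset (Fin n)).val.erase i).map lam
    with hsidef
  have hconsi : ∀ i, ((Finset.univ : Finset (Fin n)).val.map lam) = lam i ::ₘ si i := by
    intro i
    conv_lhs => rw [← Multiset.cons_erase (hmem i)]
    rw [Multiset.map_cons]
  have hcard_univ : Multiset.card (Finset.univ : Finset (Fin n)).val = n := by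
    simpa using Finset.card_univ (α := Fin n)
  have hcard_si : ∀ i, Multiset.card (si i) = n - 1 := by
    intro i
    simp only [hsidef]
    rw [Multiset.card_map, Multiset.card_erase_of_mem (hmem i), hcard_univ]
    exact Nat.pred_eq_sub_one
  have hSm : ∀ j, S j = ((Finset.univ : Finset (Fin n)).val.map lam).esymm j := by
    intro j
    rw [hS j]
    exact (Finset.esymm_map_val lam Finset.univ j).symm
  have hSrec : ∀ (i : Fin n) (j : ℕ),
      S (j + 1) = (si i).esymm (j + 1) + lam i * (si i).esymm j := by
    intro i j
    rw [hSm, hconsi i, NewtonAux.esymm_cons]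
  have heig : ∀ (j : ℕ) (i : Fin n),
      newtonP A S j (b i) = ((-1:ℝ) ^ j * (si i).esymm j) • b i := by
    intro j
    induction j with
    | zero =>
        intro i
        simp [newtonP, NewtonAux.esymm_zero]
    | succ j ih =>
        intro i
        have hunf : newtonP A S (j + 1) = ((-1 : ℝ) ^ (j + 1) * S (j + 1)) • LinearMap.id
            + A ∘ₗ newtonP A S j := rfl
        rw [hunf, LinearMap.add_apply, LinearMap.smul_apply, LinearMap.id_apply,
          LinearMap.comp_apply, ih i, map_smul, hb i, smul_smul, ← add_smul]
        congr 1
        rw [hSrec i j]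
        ring
  set c : Fin n → ℝ := fun i => (-1:ℝ) ^ (r - 1) * (si i).esymm (r - 1) with hcdef
  have hPb : ∀ i, newtonP A S (r - 1) (b i) = c i • b i := fun i => heig (r - 1) i
  have hbij : ∀ i j : Fin n, ⟪b j, b i⟫_ℝ = if j = i then 1 else 0 :=
    fun i j => orthonormal_iff_ite.mp b.orthonormal j i
  have hinner : ∀ v : E, ⟪newtonP A S (r - 1) v, v⟫_ℝ = ∑ i, c i * ⟪b i, v⟫_ℝ ^ 2 := by
    intro v
    have hPv : newtonP A S (r - 1) v = ∑ j, (b.repr v j * c j) • b j := by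
      conv_lhs => rw [← b.sum_repr v, map_sum]
      refine Finset.sum_congr rfl fun j _ => ?_
      rw [map_smul, hPb j, smul_smul]
    rw [← b.sum_inner_mul_inner (newtonP A S (r - 1) v) v]
    refine Finset.sum_congr rfl fun i _ => ?_
    have hone : ⟪∑ j, (b.repr v j * c j) • b j, b i⟫_ℝ = b.repr v i * c i := by
      rw [sum_inner, Finset.sum_eq_single i]
      · rw [real_inner_smul_left, hbij i i, if_pos rfl, mul_one]
      · intro j _ hji
        rw [real_inner_smul_left, hbij i j, if_neg hji, mul_zero]
      · intro h; exact absurd (Finset.mem_univ i) h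
    rw [hPv, hone, b.repr_apply_apply]
    ring
  have hsgn : ∀ i, (si i).esymm (r - 1) * S (r + 1) < 0 := by
    intro i
    have hrec_r : S r = (si i).esymm r + lam i * (si i).esymm (r - 1) := by
      have h := hSrec i (r - 1)
      rwa [show r - 1 + 1 = r by omega] at h
    have h1 : (si i).esymm r + lam i * (si i).esymm (r - 1) = 0 := by
      rw [← hrec_r]; exact hSr
    have h2 : (si i).esymm (r + 1) + lam i * (si i).esymm r ≠ 0 := by
      rw [← hSrec i r]; exact hSr'
    have h3 := NewtonAux.sgn (si i) (lam i) r hr1 (by rw [hcard_si i]; omega) h1 h2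
    rwa [← hSrec i r] at h3
  have hcT : ∀ i, c i * ((-1:ℝ) ^ (r - 1) * S (r + 1)) < 0 := by
    intro i
    have hsq : ((-1:ℝ) ^ (r - 1)) ^ 2 = 1 := by
      rw [← pow_mul, mul_comm, pow_mul]; norm_num
    have heq : c i * ((-1:ℝ) ^ (r - 1) * S (r + 1))
        = ((-1:ℝ) ^ (r - 1)) ^ 2 * ((si i).esymm (r - 1) * S (r + 1)) := by
      rw [hcdef]; ring
    rw [heq, hsq, one_mul]
    exact hsgn i
  have hTne : ((-1:ℝ) ^ (r - 1) * S (r + 1)) ≠ 0 :=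
    mul_ne_zero (pow_ne_zero _ (by norm_num)) hSr'
  have hex : ∀ v : E, v ≠ 0 → ∃ i, ⟪b i, v⟫_ℝ ≠ 0 := by
    intro v hv
    by_contra hno
    push_neg at hno
    apply hv
    rw [← b.sum_repr v]
    refine Finset.sum_eq_zero fun i _ => ?_
    rw [b.repr_apply_apply, hno i, zero_smul]
  rcases lt_or_gt_of_ne hTne with hT0 | hT0
  · left
    have hci : ∀ i, 0 < c i := by
      intro i
      by_contra h
      push_neg at h
      nlinarith [hcT i]
    intro v hv
    rw [hinner v]
    obtain ⟨i, hi⟩ := hex v hv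
    refine Finset.sum_pos' (fun j _ => mul_nonneg (hci j).le (sq_nonneg _))
      ⟨i, Finset.mem_univ i, ?_⟩
    exact mul_pos (hci i) (lt_of_le_of_ne (sq_nonneg _) (Ne.symm (pow_ne_zero 2 hi)))
  · right
    have hci : ∀ i, c i < 0 := by
      intro i
      by_contra h
      push_neg at h
      nlinarith [hcT i]
    intro v hv
    rw [hinner v]
    obtain ⟨i, hi⟩ := hex v hv
    have hpos : 0 < ∑ j, -(c j * ⟪b j, v⟫_ℝ ^ 2) := by
      refine Finset.sum_pos' (fun j _ => ?_) ⟨i, Finset.mem_univ i, ?_⟩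
      · have h1 := sq_nonneg ⟪b j, v⟫_ℝ
        nlinarith [hci j]
      · have h2 : 0 < ⟪b i, v⟫_ℝ ^ 2 :=
          lt_of_le_of_ne (sq_nonneg _) (Ne.symm (pow_ne_zero 2 hi))
        nlinarith [hci i]
    have hneg : ∑ j, -(c j * ⟪b j, v⟫_ℝ ^ 2) = -∑ j, c j * ⟪b j, v⟫_ℝ ^ 2 :=
      Finset.sum_neg_distrib _
    rw [hneg] at hpos
    linarith
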